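/- Let Λ be a symmetric positive definite n×n real matrix, J a skew-symmetric n×n real matrix, R a symmetric positive definite n×n real matrix, Σ a positive semidefinite symmetric n×n real matrix, and g : ℝⁿ → Matrix (Fin n) (Fin m) ℝ. Let H(x) = (1/2)·xᵀΛx and y(x) = g(x)ᵀΛx. Then there exist constants C > 0 and δ > 0 such that for every x ∈ ℝⁿ with ‖x‖ ≥ C and every u ∈ ℝᵐ, the generator L H(x) = ((J−R)Λx + g(x)u)·(Λx) + (1/2)·Tr(ΣΛ) satisfies L H(x) ≤ y(x)ᵀu − δ‖x‖². That is, the stochastic port–Hamiltonian system with additive noise and quadratic Hamiltonian is always strictly ultimately stochastic passive. -/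

import Mathlib

open Matrix

lemma quad_lower_bound (n : ℕ) (M : Matrix (Fin n) (Fin n) ℝ)
    (h : ∀ x : Fin n → ℝ, x ≠ 0 → 0 < x ⬝ᵥ M.mulVec x) :
    ∃ c > (0 : ℝ), ∀ x : Fin n → ℝ, c * ‖x‖ ^ 2 ≤ x ⬝ᵥ M.mulVec x := by
  by_cases hn : ∃ v : Fin n → ℝ, v ≠ 0
  · obtain ⟨v, hv⟩ := hn
    have hsph : (Metric.sphere (0 : Fin n → ℝ) 1).Nonempty := by
      refine ⟨‖v‖⁻¹ • v, ?_⟩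
      simp [norm_smul, inv_mul_cancel₀ (norm_ne_zero_iff.mpr hv)]
    have hcont : Continuous fun x : Fin n → ℝ => x ⬝ᵥ M.mulVec x :=
      continuous_id.dotProduct (continuous_const.matrix_mulVec continuous_id)
    obtain ⟨v₀, hv₀, hmin⟩ := (isCompact_sphere (0 : Fin n → ℝ) 1).exists_isMinOn hsph
      hcont.continuousOn
    have hv₀1 : ‖v₀‖ = 1 := by simpa using hv₀
    have hv₀ne : v₀ ≠ 0 := by
      intro h0; rw [h0] at hv₀1; simp at hv₀1
    refine ⟨v₀ ⬝ᵥ M.mulVec v₀, h v₀ hv₀ne, fun x => ?_⟩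
    by_cases hx : x = 0
    · simp [hx]
    · have hxn : ‖x‖ ≠ 0 := norm_ne_zero_iff.mpr hx
      set w : Fin n → ℝ := ‖x‖⁻¹ • x with hw
      have hwsph : w ∈ Metric.sphere 0 1 := by
        simp [hw, norm_smul, inv_mul_cancel₀ hxn]
      have h1 := hmin hwsph
      have h2 : w ⬝ᵥ M.mulVec w = ‖x‖⁻¹ * ‖x‖⁻¹ * (x ⬝ᵥ M.mulVec x) := by
        simp [hw, mulVec_smul, dotProduct_smul, smul_dotProduct, smul_eq_mul]; ring
      have h3 : (v₀ ⬝ᵥ M.mulVec v₀) * ‖x‖ ^ 2 ≤ (w ⬝ᵥ M.mulVec w) * ‖x‖ ^ 2 := by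
        apply mul_le_mul_of_nonneg_right h1 (by positivity)
      calc (v₀ ⬝ᵥ M.mulVec v₀) * ‖x‖ ^ 2 ≤ (w ⬝ᵥ M.mulVec w) * ‖x‖ ^ 2 := h3
        _ = x ⬝ᵥ M.mulVec x := by
            rw [h2]; field_simp
  · push_neg at hn
    refine ⟨1, one_pos, fun x => ?_⟩
    simp [hn x]

theorem stmt_2 (n m : ℕ)
    (Λ J R Sig : Matrix (Fin n) (Fin n) ℝ)
    (hΛ : Λ.PosDef) (hΛsymm : Λ.IsSymm)
    (hJ : Jᵀ = -J)
    (hR : R.PosDef) (hRsymm : R.IsSymm)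
    (hSig : Sig.PosSemidef) (hSigsymm : Sig.IsSymm)
    (g : (Fin n → ℝ) → Matrix (Fin n) (Fin m) ℝ)
    (H : (Fin n → ℝ) → ℝ)
    (hH : ∀ x, H x = (1 / 2) * (x ⬝ᵥ Λ.mulVec x))
    (y : (Fin n → ℝ) → (Fin m → ℝ))
    (hy : ∀ x, y x = (g x)ᵀ.mulVec (Λ.mulVec x)) :
    ∃ C > (0 : ℝ), ∃ δ > (0 : ℝ), ∀ (x : Fin n → ℝ) (u : Fin m → ℝ), ‖x‖ ≥ C →
      ((J - R).mulVec (Λ.mulVec x) + (g x).mulVec u) ⬝ᵥ (Λ.mulVec x) +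
          (1 / 2) * Matrix.trace (Sig * Λ) ≤
        y x ⬝ᵥ u - δ * ‖x‖ ^ 2 := by
  -- the matrix of the dissipation quadratic form
  set M : Matrix (Fin n) (Fin n) ℝ := Λ * R * Λ with hM
  have hΛinj : Function.Injective (Λ.mulVec) :=
    mulVec_injective_iff_isUnit.mpr hΛ.isUnit
  have hMform : ∀ x : Fin n → ℝ, x ⬝ᵥ M.mulVec x = (Λ.mulVec x) ⬝ᵥ R.mulVec (Λ.mulVec x) := by
    intro x
    rw [hM, ← mulVec_mulVec, ← mulVec_mulVec, dotProduct_mulVec, ← mulVec_transpose,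
      hΛsymm.eq]
  have hMpos : ∀ x : Fin n → ℝ, x ≠ 0 → 0 < x ⬝ᵥ M.mulVec x := by
    intro x hx
    rw [hMform]
    have hv : Λ.mulVec x ≠ 0 := by
      intro h0
      exact hx (hΛinj (by simpa [Matrix.mulVec_zero] using h0))
    simpa using hR.re_dotProduct_pos hv
  obtain ⟨c, hc, hquad⟩ := quad_lower_bound n M hMpos
  set T : ℝ := Matrix.trace (Sig * Λ) with hT
  refine ⟨Real.sqrt ((|T| + 1) / c) + 1, by positivity, c / 2, by positivity, fun x u hx => ?_⟩
  set v : Fin n → ℝ := Λ.mulVec x with hv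
  -- the skew term vanishes
  have hJterm : (J.mulVec v) ⬝ᵥ v = 0 := by
    have h1 : v ⬝ᵥ (J.mulVec v) = -((J.mulVec v) ⬝ᵥ v) := by
      rw [dotProduct_mulVec, ← mulVec_transpose, hJ, neg_mulVec, neg_dotProduct]
    have h2 : v ⬝ᵥ (J.mulVec v) = (J.mulVec v) ⬝ᵥ v := dotProduct_comm _ _
    linarith
  -- the input term equals the output pairing
  have hgterm : ((g x).mulVec u) ⬝ᵥ v = y x ⬝ᵥ u := by
    rw [hy, dotProduct_comm, dotProduct_mulVec, ← mulVec_transpose]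
  -- norm bound
  have hxC : ‖x‖ ≥ Real.sqrt ((|T| + 1) / c) + 1 := hx
  have hs : (0:ℝ) ≤ (|T| + 1) / c := by positivity
  have hxsq : c * ‖x‖ ^ 2 ≥ |T| + 1 := by
    have h1 : ‖x‖ ≥ Real.sqrt ((|T| + 1) / c) := by
      linarith [hxC]
    have h2 : ‖x‖ ^ 2 ≥ (|T| + 1) / c := by
      calc ‖x‖ ^ 2 ≥ Real.sqrt ((|T| + 1) / c) ^ 2 :=
            pow_le_pow_left₀ (Real.sqrt_nonneg _) h1 2
        _ = (|T| + 1) / c := Real.sq_sqrt hs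
    calc c * ‖x‖ ^ 2 ≥ c * ((|T| + 1) / c) := by
          exact mul_le_mul_of_nonneg_left h2 hc.le
      _ = |T| + 1 := by field_simp
  have hform := hquad x
  rw [hMform] at hform
  have hRv : v ⬝ᵥ R.mulVec v ≥ c * ‖x‖ ^ 2 := hform
  have hRv' : (R.mulVec v) ⬝ᵥ v = v ⬝ᵥ R.mulVec v := dotProduct_comm _ _
  have hTle : T ≤ |T| := le_abs_self T
  -- expand the left-hand side
  have hexp : ((J - R).mulVec v + (g x).mulVec u) ⬝ᵥ v
      = (J.mulVec v) ⬝ᵥ v - (R.mulVec v) ⬝ᵥ v + ((g x).mulVec u) ⬝ᵥ v := by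
    rw [add_dotProduct, sub_mulVec, sub_dotProduct]
  rw [hexp, hJterm, hgterm, hRv']
  have h2T : (1/2 : ℝ) * T = T / 2 := by ring
  nlinarith [hRv, hxsq, hTle]
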